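/- Let w(x) = √((1-|x|²)/2) on the open unit disk D ⊆ ℝ² and let d_H denote the Hilbert metric of D, which is given by d_H(x,y) = 2log(1 - x·y + √(|y-x|² - |x∧y|²)) − log((1-|x|²)(1-|y|²)). Then |log w(x) − log w(y)| ≤ (1/2) d_H(x,y) for all x, y ∈ D. -/

import Mathlib

open Set

noncomputable def wDisk (x : EuclideanSpace ℝ (Fin 2)) : ℝ :=
  Real.sqrt ((1 - ‖x‖ ^ 2) / 2)

noncomputable def hilbertDisk (x y : EuclideanSpace ℝ (Fin 2)) : ℝ :=
  2 * Real.log (1 - (inner ℝ x y : ℝ) +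
      Real.sqrt (‖y - x‖ ^ 2 - (x 0 * y 1 - x 1 * y 0) ^ 2)) -
    Real.log ((1 - ‖x‖ ^ 2) * (1 - ‖y‖ ^ 2))


lemma aux_rad (X Y p : ℝ) (hd : 0 ≤ X + Y - 2 * p) (hX : X < 1) (hY : Y < 1) :
    0 ≤ (1 - p) ^ 2 - (1 - X) * (1 - Y) := by
  nlinarith [sq_nonneg (X - Y)]

lemma aux_key (X Y p s : ℝ) (hX : X < 1) (hY : Y < 1) (hd : 0 ≤ X + Y - 2 * p)
    (hsn : 0 ≤ s) (hsq : s ^ 2 = (1 - p) ^ 2 - (1 - X) * (1 - Y)) :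
    1 - X ≤ 1 - p + s := by
  rcases le_or_gt (p - X) 0 with h | h
  · linarith
  · have h2 : (p - X) ^ 2 ≤ (1 - p) ^ 2 - (1 - X) * (1 - Y) := by nlinarith
    nlinarith [sq_nonneg (s - (p - X))]

theorem stmt_14 (x y : EuclideanSpace ℝ (Fin 2)) (hx : ‖x‖ < 1) (hy : ‖y‖ < 1) :
    |Real.log (wDisk x) - Real.log (wDisk y)| ≤ (1 / 2) * hilbertDisk x y := by
  set p : ℝ := (inner ℝ x y : ℝ) with hp
  have hip : p = x 0 * y 0 + x 1 * y 1 := by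
    simp [hp, PiLp.inner_apply, Fin.sum_univ_two]; ring
  have hx2 : ‖x‖ ^ 2 = x 0 ^ 2 + x 1 ^ 2 := by
    rw [← real_inner_self_eq_norm_sq]
    simp only [PiLp.inner_apply, Fin.sum_univ_two, RCLike.inner_apply, conj_trivial, PiLp.sub_apply]; ring
  have hy2 : ‖y‖ ^ 2 = y 0 ^ 2 + y 1 ^ 2 := by
    rw [← real_inner_self_eq_norm_sq]
    simp only [PiLp.inner_apply, Fin.sum_univ_two, RCLike.inner_apply, conj_trivial, PiLp.sub_apply]; ring
  have hyx2 : ‖y - x‖ ^ 2 = (y 0 - x 0) ^ 2 + (y 1 - x 1) ^ 2 := by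
    rw [← real_inner_self_eq_norm_sq]
    simp only [PiLp.inner_apply, Fin.sum_univ_two, RCLike.inner_apply, conj_trivial, PiLp.sub_apply]; ring
  set a : ℝ := 1 - ‖x‖ ^ 2 with ha
  set b : ℝ := 1 - ‖y‖ ^ 2 with hb
  have ha0 : 0 < a := by
    have : ‖x‖ ^ 2 < 1 := by nlinarith [norm_nonneg x]
    linarith
  have hb0 : 0 < b := by
    have : ‖y‖ ^ 2 < 1 := by nlinarith [norm_nonneg y]
    linarith
  -- key identity for the radicand
  have hR : ‖y - x‖ ^ 2 - (x 0 * y 1 - x 1 * y 0) ^ 2 = (1 - p) ^ 2 - a * b := by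
    rw [hyx2, ha, hb, hx2, hy2, hip]; ring
  -- distance expansion
  have hdist : ‖x‖ ^ 2 + ‖y‖ ^ 2 - 2 * p = (x 0 - y 0) ^ 2 + (x 1 - y 1) ^ 2 := by
    rw [hx2, hy2, hip]; ring
  have hdn : 0 ≤ ‖x‖ ^ 2 + ‖y‖ ^ 2 - 2 * p := by
    rw [hdist]; positivity
  set s : ℝ := Real.sqrt (‖y - x‖ ^ 2 - (x 0 * y 1 - x 1 * y 0) ^ 2) with hs
  set S : ℝ := 1 - p + s with hS
  have hsq : s ^ 2 = (1 - p) ^ 2 - a * b := by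
    rw [hs, Real.sq_sqrt, hR]
    rw [hR, ha, hb]
    exact aux_rad _ _ _ hdn (by linarith) (by linarith)
  have hsn : 0 ≤ s := Real.sqrt_nonneg _
  have hX1 : ‖x‖ ^ 2 < 1 := by linarith
  have hY1 : ‖y‖ ^ 2 < 1 := by linarith
  have haS : a ≤ S :=
    aux_key (‖x‖ ^ 2) (‖y‖ ^ 2) p s hX1 hY1 hdn hsn (by rw [hsq])
  have hbS : b ≤ S := by
    have := aux_key (‖y‖ ^ 2) (‖x‖ ^ 2) p s hY1 hX1 (by linarith) hsn
      (by rw [hsq]; ring)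
    simp only [hS, hb]; linarith
  have hS0 : 0 < S := lt_of_lt_of_le ha0 haS
  have hlogaS : Real.log a ≤ Real.log S := Real.log_le_log ha0 haS
  have hlogbS : Real.log b ≤ Real.log S := Real.log_le_log hb0 hbS
  have hwx : Real.log (wDisk x) = (1 / 2) * Real.log (a / 2) := by
    rw [wDisk, Real.log_sqrt (by positivity)]; ring
  have hwy : Real.log (wDisk y) = (1 / 2) * Real.log (b / 2) := by
    rw [wDisk, Real.log_sqrt (by positivity)]; ring
  have hla : Real.log (a / 2) = Real.log a - Real.log 2 :=
    Real.log_div (ne_of_gt ha0) two_ne_zero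
  have hlb : Real.log (b / 2) = Real.log b - Real.log 2 :=
    Real.log_div (ne_of_gt hb0) two_ne_zero
  have hlab : Real.log (a * b) = Real.log a + Real.log b :=
    Real.log_mul (ne_of_gt ha0) (ne_of_gt hb0)
  rw [hwx, hwy, hla, hlb, hilbertDisk]
  rw [abs_le]
  constructor <;> · simp only [← hs, ← hS, ← ha, ← hb, hlab]; linarith
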